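/- arXiv:2106.16005 — 5 statements merged into one kernel-verified Lean document; each statement's English description precedes it below -/
import Mathlib

section
/- Let R be a complete discrete valuation ring whose residue field is algebraically closed of characteristic p, let q = p^h for some integer h ≥ 1, and let σ : R → R be a ring endomorphism such that σ(x) ≡ x^q modulo the maximal ideal of R for every x ∈ R. Then for every unit ε₁ ∈ R^× and every element ε₂ ∈ R there exists a unit x ∈ R^× such that ε₁·σ(x) − x = ε₂. -/
open Polynomial IsLocalRing

/-- Auxiliary sequence constructor. -/
private noncomputable def seqAux' {α : Type*} (x0 : α) (g : ℕ → α → α) : ℕ → α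
  | 0 => x0
  | n + 1 => g n (seqAux' x0 g n)

private theorem exists_sub_mul_pow_eq {k : Type*} [Field k] [IsAlgClosed k] {q : ℕ}
    (hq : 2 ≤ q) (a b : k) : ∃ c : k, c - a * c ^ q = b := by
  by_cases ha : a = 0
  · exact ⟨b, by simp [ha]⟩
  · have hd : ((C (-a) * X ^ q : k[X])).degree = q := degree_C_mul_X_pow q (neg_ne_zero.2 ha)
    have hdd : (C (-a) * X ^ q + (X - C b)).degree ≠ 0 := by
      rw [degree_add_eq_left_of_degree_lt (by
        rw [hd]
        exact lt_of_le_of_lt (degree_X_sub_C_le b) (by exact_mod_cast (by omega : 1 < q))), hd]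
      exact_mod_cast (by omega : q ≠ 0)
    obtain ⟨z, hz⟩ := IsAlgClosed.exists_root _ hdd
    refine ⟨z, ?_⟩
    simp only [IsRoot, eval_add, eval_mul, eval_pow, eval_X, eval_sub, eval_C, eval_neg] at hz
    linear_combination hz

private theorem exists_ne_zero_mul_pow_sub_eq {k : Type*} [Field k] [IsAlgClosed k] {q : ℕ}
    (hq : 2 ≤ q) (a b : k) (ha : a ≠ 0) : ∃ c : k, c ≠ 0 ∧ a * c ^ q - c = b := by
  by_cases hb : b = 0
  · have hd : ((C a * X ^ (q - 1) : k[X])).degree = (q - 1 : ℕ) := degree_C_mul_X_pow _ ha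
    have hdd : (C a * X ^ (q - 1) - C 1).degree ≠ 0 := by
      rw [degree_sub_eq_left_of_degree_lt (by
        rw [hd]; exact lt_of_le_of_lt degree_C_le (by exact_mod_cast (by omega : 0 < q - 1))), hd]
      exact_mod_cast (by omega : q - 1 ≠ 0)
    obtain ⟨z, hz⟩ := IsAlgClosed.exists_root _ hdd
    have hzval : a * z ^ (q - 1) - 1 = 0 := by simpa [IsRoot] using hz
    have hz0 : z ≠ 0 := by
      rintro rfl
      rw [zero_pow (by omega)] at hzval; simp at hzval
    refine ⟨z, hz0, ?_⟩
    have hp : z ^ q = z ^ (q - 1) * z := by rw [← pow_succ]; congr 1; omega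
    rw [hp, hb]
    linear_combination z * hzval
  · have hd : ((C a * X ^ q : k[X])).degree = q := degree_C_mul_X_pow _ ha
    have hdd : (C a * X ^ q - (X + C b)).degree ≠ 0 := by
      rw [degree_sub_eq_left_of_degree_lt (by
        rw [hd]
        exact lt_of_le_of_lt (degree_X_add_C b).le (by exact_mod_cast (by omega : 1 < q))), hd]
      exact_mod_cast (by omega : q ≠ 0)
    obtain ⟨z, hz⟩ := IsAlgClosed.exists_root _ hdd
    have hzval : a * z ^ q - (z + b) = 0 := by simpa [IsRoot] using hz
    have hz0 : z ≠ 0 := by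
      rintro rfl
      rw [zero_pow (by omega)] at hzval
      exact hb (by linear_combination -hzval)
    exact ⟨z, hz0, by linear_combination hzval⟩

theorem stmt_0 (p : ℕ) (hp : p.Prime) (h : ℕ) (hh : 1 ≤ h) (q : ℕ) (hq : q = p ^ h)
    (R : Type*) [CommRing R] [IsDomain R] [IsDiscreteValuationRing R]
    [IsAdicComplete (IsLocalRing.maximalIdeal R) R]
    [IsAlgClosed (IsLocalRing.ResidueField R)]
    (hchar : CharP (IsLocalRing.ResidueField R) p)
    (σ : R →+* R) (hσ : ∀ x : R, σ x - x ^ q ∈ IsLocalRing.maximalIdeal R)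
    (ε₁ : Rˣ) (ε₂ : R) :
    ∃ x : Rˣ, (ε₁ : R) * σ x - x = ε₂ := by
  classical
  have hq2 : 2 ≤ q := by
    rw [hq]
    calc 2 ≤ p := hp.two_le
    _ ≤ p ^ h := Nat.le_self_pow (by omega) p
  set φ : R →+* ResidueField R := residue R with hφdef
  have hmem : ∀ x : R, x ∈ maximalIdeal R ↔ φ x = 0 := fun x =>
    (Ideal.Quotient.eq_zero_iff_mem).symm
  have hφσ : ∀ x : R, φ (σ x) = (φ x) ^ q := by
    intro x
    have h1 : φ (σ x - x ^ q) = 0 := (hmem _).1 (hσ x)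
    rw [map_sub, map_pow, sub_eq_zero] at h1
    exact h1
  -- uniformizer
  obtain ⟨π, hπ⟩ := IsDiscreteValuationRing.exists_irreducible R
  have hspan : maximalIdeal R = Ideal.span {π} :=
    (IsDiscreteValuationRing.irreducible_iff_uniformizer π).1 hπ
  have hπm : π ∈ maximalIdeal R := hspan ▸ Ideal.mem_span_singleton_self π
  have hσπ : σ π ∈ maximalIdeal R := by
    have h2 : π ^ q ∈ maximalIdeal R := Ideal.pow_mem_of_mem _ hπm q (by omega)
    have h3 := (maximalIdeal R).add_mem (hσ π) h2
    simpa using h3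
  obtain ⟨t, ht⟩ : ∃ t, σ π = π * t := by
    rw [hspan, Ideal.mem_span_singleton] at hσπ
    exact hσπ
  set f : R → R := fun y => (ε₁ : R) * σ y - y - ε₂ with hf
  -- the inductive step
  have step : ∀ (n : ℕ) (y : R), f y ∈ maximalIdeal R ^ (n + 1) →
      ∃ δ : R, δ ∈ maximalIdeal R ^ (n + 1) ∧ f (y + δ) ∈ maximalIdeal R ^ (n + 2) := by
    intro n y hy
    rw [hspan, Ideal.span_singleton_pow, Ideal.mem_span_singleton] at hy
    obtain ⟨w, hw⟩ := hy
    obtain ⟨cb, hcb⟩ := exists_sub_mul_pow_eq hq2 (φ ((ε₁ : R) * t ^ (n + 1))) (φ w)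
    obtain ⟨c, hc0⟩ := residue_surjective (R := R) cb
    have hc : φ c = cb := hc0
    refine ⟨c * π ^ (n + 1), ?_, ?_⟩
    · rw [hspan, Ideal.span_singleton_pow, Ideal.mem_span_singleton]
      exact dvd_mul_left _ _
    · have key : w + (ε₁ : R) * σ c * t ^ (n + 1) - c ∈ maximalIdeal R := by
        rw [hmem, map_sub, map_add, map_mul, map_mul, map_pow, hφσ c]
        rw [map_mul, map_pow] at hcb
        rw [← hc] at hcb
        linear_combination -hcb
      have expand : f (y + c * π ^ (n + 1)) =
          π ^ (n + 1) * (w + (ε₁ : R) * σ c * t ^ (n + 1) - c) := by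
        have hσδ : σ (y + c * π ^ (n + 1)) = σ y + σ c * (π * t) ^ (n + 1) := by
          rw [map_add, map_mul, map_pow, ht]
        simp only [hf]
        rw [hσδ]
        have hw' : (ε₁ : R) * σ y - y - ε₂ = π ^ (n + 1) * w := hw
        rw [mul_pow]
        linear_combination hw'
      rw [expand, hspan] at *
      rw [Ideal.mem_span_singleton] at key
      obtain ⟨s, hs⟩ := key
      rw [Ideal.span_singleton_pow, Ideal.mem_span_singleton]
      exact ⟨s, by rw [hs]; ring⟩
  -- base point
  have hε₁ : φ (ε₁ : R) ≠ 0 := (residue_ne_zero_iff_isUnit _).2 ε₁.isUnit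
  obtain ⟨x0b, hx0b0, hx0b⟩ := exists_ne_zero_mul_pow_sub_eq hq2 (φ (ε₁ : R)) (φ ε₂) hε₁
  obtain ⟨x0, hx0φ⟩ := residue_surjective (R := R) x0b
  have hx0 : f x0 ∈ maximalIdeal R ^ (0 + 1) := by
    rw [pow_one, hmem]
    simp only [hf]
    rw [map_sub, map_sub, map_mul, hφσ, hx0φ]
    linear_combination hx0b
  -- the sequence
  set g : ℕ → R → R := fun n y =>
    if hy : f y ∈ maximalIdeal R ^ (n + 1) then y + Classical.choose (step n y hy) else y
    with hg
  set u : ℕ → R := seqAux' x0 g with hu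
  have husucc : ∀ n, u (n + 1) = g n (u n) := fun n => rfl
  have hP : ∀ n, f (u n) ∈ maximalIdeal R ^ (n + 1) := by
    intro n
    induction n with
    | zero => exact hx0
    | succ n ih =>
      rw [husucc n]
      simp only [hg, dif_pos ih]
      exact (Classical.choose_spec (step n (u n) ih)).2
  have hdiff : ∀ n, u (n + 1) - u n ∈ maximalIdeal R ^ (n + 1) := by
    intro n
    rw [husucc n]
    simp only [hg, dif_pos (hP n)]
    simpa using (Classical.choose_spec (step n (u n) (hP n))).1
  have hdiff2 : ∀ i j : ℕ, u (i + j) - u i ∈ maximalIdeal R ^ i := by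
    intro i j
    induction j with
    | zero => simp
    | succ j ih =>
      have h1 : u (i + j + 1) - u (i + j) ∈ maximalIdeal R ^ i :=
        Ideal.pow_le_pow_right (by omega) (hdiff (i + j))
      have := add_mem h1 ih
      rw [show u (i + j + 1) - u (i + j) + (u (i + j) - u i) = u (i + (j + 1)) - u i by
        rw [show i + (j + 1) = i + j + 1 by omega]; ring] at this
      exact this
  have hcau : ∀ {i j : ℕ}, i ≤ j →
      u i ≡ u j [SMOD (maximalIdeal R ^ i • ⊤ : Submodule R R)] := by
    intro i j hij
    rw [SModEq.sub_mem, Ideal.smul_eq_mul, Ideal.mul_top]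
    obtain ⟨d, rfl⟩ := Nat.exists_eq_add_of_le hij
    simpa [neg_sub] using neg_mem (hdiff2 i d)
  obtain ⟨L, hL⟩ := IsPrecomplete.prec
    (IsAdicComplete.toIsPrecomplete (I := maximalIdeal R) (M := R)) @hcau
  have hLn : ∀ n, u n - L ∈ maximalIdeal R ^ n := by
    intro n
    have := hL n
    rwa [SModEq.sub_mem, Ideal.smul_eq_mul, Ideal.mul_top] at this
  -- σ preserves powers of the maximal ideal
  have hσpow : ∀ (n : ℕ) (x : R), x ∈ maximalIdeal R ^ n → σ x ∈ maximalIdeal R ^ n := by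
    intro n x hx
    rw [hspan, Ideal.span_singleton_pow, Ideal.mem_span_singleton] at hx ⊢
    obtain ⟨d, rfl⟩ := hx
    exact ⟨t ^ n * σ d, by rw [map_mul, map_pow, ht]; ring⟩
  have hfL : ∀ n, f L ∈ maximalIdeal R ^ n := by
    intro n
    have h1 : L - u n ∈ maximalIdeal R ^ n := by simpa using neg_mem (hLn n)
    have h2 : f L = f (u n) + ((ε₁ : R) * σ (L - u n) - (L - u n)) := by
      simp only [hf]
      rw [map_sub]
      ring
    rw [h2]
    exact add_mem (Ideal.pow_le_pow_right (by omega) (hP n))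
      (sub_mem (Ideal.mul_mem_left _ _ (hσpow n _ h1)) h1)
  have hf0 : f L = 0 := by
    refine IsHausdorff.haus (IsAdicComplete.toIsHausdorff (I := maximalIdeal R) (M := R))
      (f L) fun n => ?_
    rw [SModEq.sub_mem, Ideal.smul_eq_mul, Ideal.mul_top, sub_zero]
    exact hfL n
  -- L is a unit
  have hLx0 : L - x0 ∈ maximalIdeal R := by
    have h1 : u 1 - L ∈ maximalIdeal R ^ 1 := hLn 1
    have h2 : u 1 - u 0 ∈ maximalIdeal R ^ 1 := hdiff 0
    rw [pow_one] at h1 h2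
    have := sub_mem h2 h1
    rwa [show u 1 - u 0 - (u 1 - L) = L - u 0 from by ring] at this
  have hLunit : IsUnit L := by
    rw [← residue_ne_zero_iff_isUnit]
    intro h0
    have hφL : φ L = φ x0 := by
      have := (hmem _).1 hLx0
      rw [map_sub, sub_eq_zero] at this
      exact this
    apply hx0b0
    rw [← hx0φ]
    calc (residue R) x0 = φ x0 := rfl
    _ = φ L := hφL.symm
    _ = 0 := h0
  obtain ⟨xu, hxu⟩ := hLunit
  refine ⟨xu, ?_⟩
  simp only [hf] at hf0
  rw [hxu]
  linear_combination hf0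
end

section
/- Let p be a prime, let k̄ be an algebraic closure of the field with p elements, let W = 𝕎(k̄) be the ring of p-typical Witt vectors of k̄, and let φ : W → W be the Witt vector Frobenius. Then for every unit ε₁ ∈ W^× and every ε₂ ∈ W there exists a unit x ∈ W^× such that ε₁·φ(x) − x = ε₂. -/
open WittVector Function

section Aux

variable {p : ℕ} [hp : Fact p.Prime] {k : Type*} [Field k] [CharP k p] [IsAlgClosed k]

local notation "𝕎" => WittVector p

-- coeff i of V^n t is 0 for i < n
lemma aux_vshift_coeff (n : ℕ) (t : 𝕎 k) {i : ℕ} (hi : i < n) :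
    (verschiebung^[n] t).coeff i = 0 := by
  induction n generalizing i t with
  | zero => omega
  | succ n ih =>
    rw [Function.iterate_succ_apply']
    cases i with
    | zero => exact verschiebung_coeff_zero _
    | succ i => rw [verschiebung_coeff_succ]; exact ih t (by omega)

lemma aux_trunc_vshift (n : ℕ) (t : 𝕎 k) :
    WittVector.truncate n (verschiebung^[n] t) = 0 := by
  apply TruncatedWittVector.ext
  intro i
  rw [WittVector.coeff_truncate]
  simpa using aux_vshift_coeff n t i.is_lt

-- if coeff 0 vanishes, it's a verschiebung
lemma aux_exists_v (w : 𝕎 k) (h : w.coeff 0 = 0) : ∃ w', w = verschiebung w' := by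
  refine ⟨WittVector.mk p (fun i => w.coeff (i + 1)), ?_⟩
  ext i
  cases i with
  | zero => rw [verschiebung_coeff_zero, h]
  | succ i => rw [verschiebung_coeff_succ, WittVector.coeff_mk]

-- root of c X^p - X + d
lemma aux_root (c d : k) : ∃ z : k, c * z ^ p - z + d = 0 := by
  by_cases hc : c = 0
  · exact ⟨d, by simp [hc]⟩
  · obtain ⟨z, hz⟩ := IsAlgClosed.exists_root
      (Polynomial.C c * Polynomial.X ^ p - Polynomial.X + Polynomial.C d) (by
        have h1 : (Polynomial.C c * Polynomial.X ^ p : Polynomial k).degree = p := by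
          rw [Polynomial.degree_C_mul hc, Polynomial.degree_X_pow]
        have h2 : (Polynomial.C c * Polynomial.X ^ p - Polynomial.X : Polynomial k).degree = p := by
          rw [Polynomial.degree_sub_eq_left_of_degree_lt, h1]
          rw [h1, Polynomial.degree_X]
          exact_mod_cast hp.out.one_lt
        rw [Polynomial.degree_add_eq_left_of_degree_lt, h2]
        · simp [hp.out.ne_zero]
        · rw [h2]
          apply lt_of_le_of_lt Polynomial.degree_C_le
          exact_mod_cast hp.out.pos)
    refine ⟨z, ?_⟩
    simpa [Polynomial.IsRoot] using hz

lemma aux_vit_sub (n : ℕ) (s t : 𝕎 k) :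
    verschiebung^[n] (s - t) = verschiebung^[n] s - verschiebung^[n] t := by
  induction n generalizing s t with
  | zero => rfl
  | succ n ih => simp [Function.iterate_succ_apply', ih, map_sub]

lemma aux_vit_add (n : ℕ) (s t : 𝕎 k) :
    verschiebung^[n] (s + t) = verschiebung^[n] s + verschiebung^[n] t := by
  induction n generalizing s t with
  | zero => rfl
  | succ n ih => simp [Function.iterate_succ_apply', ih, map_add]

lemma aux_step (a y : 𝕎 k) (n : ℕ) (x w : 𝕎 k)
    (h : a * frobenius x - x - y = verschiebung^[n] w) :
    ∃ x' w', (a * frobenius x' - x' - y = verschiebung^[n + 1] w') ∧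
      ∃ z, x' = x - verschiebung^[n] z := by
  obtain ⟨z₀, hz⟩ := aux_root (p := p) ((frobenius^[n] a).coeff 0) (-w.coeff 0)
  set z : 𝕎 k := WittVector.mk p (fun i => if i = 0 then z₀ else 0) with hzdef
  have hz0 : z.coeff 0 = z₀ := by rw [hzdef, WittVector.coeff_mk]; simp
  have hFz : frobenius (verschiebung^[n] z) = verschiebung^[n] (frobenius z) :=
    ((verschiebung_frobenius_comm (p := p) (R := k)).iterate_left n z).symm
  have hmul : a * verschiebung^[n] (frobenius z)
      = verschiebung^[n] (frobenius z * frobenius^[n] a) := by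
    rw [mul_comm, iterate_verschiebung_mul_left]
  have hE : a * frobenius (x - verschiebung^[n] z) - (x - verschiebung^[n] z) - y
      = verschiebung^[n] (w - frobenius z * frobenius^[n] a + z) := by
    rw [map_sub, mul_sub, hFz, hmul, aux_vit_add, aux_vit_sub, ← h]
    ring
  have hcoeff : (w - frobenius z * frobenius^[n] a + z).coeff 0 = 0 := by
    have := map_add WittVector.constantCoeff (w - frobenius z * frobenius^[n] a) z
    have h2 := map_sub WittVector.constantCoeff w (frobenius z * frobenius^[n] a)
    simp only [WittVector.constantCoeff_apply] at this h2
    rw [this, h2, WittVector.mul_coeff_zero, WittVector.coeff_frobenius_charP, hz0]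
    linear_combination -hz
  obtain ⟨w'', hw⟩ := aux_exists_v _ hcoeff
  refine ⟨x - verschiebung^[n] z, w'', ?_, ⟨z, rfl⟩⟩
  rw [hE, hw, ← Function.iterate_succ_apply]

lemma aux_trunc_vshift' {n m : ℕ} (h : n ≤ m) (t : 𝕎 k) :
    WittVector.truncate n (verschiebung^[m] t) = 0 := by
  apply TruncatedWittVector.ext
  intro i
  rw [WittVector.coeff_truncate]
  simpa using aux_vshift_coeff m t (lt_of_lt_of_le i.is_lt h)

lemma aux_trunc_frob {n : ℕ} {x x' : 𝕎 k} (h : WittVector.truncate n x = WittVector.truncate n x') :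
    WittVector.truncate n (frobenius x) = WittVector.truncate n (frobenius x') := by
  apply TruncatedWittVector.ext
  intro i
  have : x.coeff i = x'.coeff i := by
    have := congrArg (fun t => TruncatedWittVector.coeff i t) h
    simpa [WittVector.coeff_truncate] using this
  rw [WittVector.coeff_truncate, WittVector.coeff_truncate, coeff_frobenius_charP,
    coeff_frobenius_charP, this]

lemma aux_surj (a y : 𝕎 k) : ∃ x : 𝕎 k, a * frobenius x - x = y := by
  classical
  have step := aux_step (p := p) a y
  -- build the sequence
  let s : ∀ n : ℕ, {q : 𝕎 k × 𝕎 k // a * frobenius q.1 - q.1 - y = verschiebung^[n] q.2} :=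
    fun n => Nat.rec ⟨(0, -y), by simp⟩
      (fun n ih =>
        ⟨((step n ih.1.1 ih.1.2 ih.2).choose,
          (step n ih.1.1 ih.1.2 ih.2).choose_spec.choose),
          (step n ih.1.1 ih.1.2 ih.2).choose_spec.choose_spec.1⟩) n
  let X : ℕ → 𝕎 k := fun n => (s n).1.1
  have hsX : ∀ n, a * frobenius (X n) - X n - y = verschiebung^[n] ((s n).1.2) := fun n => (s n).2
  have hstep : ∀ n, ∃ z, X (n + 1) = X n - verschiebung^[n] z := fun n =>
    (step n (s n).1.1 (s n).1.2 (s n).2).choose_spec.choose_spec.2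
  -- stabilization of truncations
  have hstab : ∀ n m, n ≤ m → WittVector.truncate n (X m) = WittVector.truncate n (X n) := by
    intro n m h
    induction m with
    | zero =>
      have : n = 0 := by omega
      subst this; rfl
    | succ m ih =>
      rcases Nat.lt_or_ge n (m + 1) with hlt | hge
      · have hnm : n ≤ m := by omega
        obtain ⟨z, hz⟩ := hstep m
        rw [hz, map_sub, aux_trunc_vshift' (le_trans hnm (le_refl m)) z, sub_zero, ih hnm]
      · have : n = m + 1 := by omega
        subst this; rfl
  -- the limit
  let L : 𝕎 k := WittVector.mk p (fun i => (X (i + 1)).coeff i)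
  have hL : ∀ n, WittVector.truncate n L = WittVector.truncate n (X n) := by
    intro n
    apply TruncatedWittVector.ext
    intro i
    rw [WittVector.coeff_truncate, WittVector.coeff_truncate]
    have h1 : (X n).coeff i = (X (i + 1)).coeff i := by
      have h2 := hstab (i + 1) n i.is_lt
      have := congrArg (fun t => TruncatedWittVector.coeff ⟨i, Nat.lt_succ_self i⟩ t) h2
      simpa [WittVector.coeff_truncate] using this
    rw [h1]
    exact (WittVector.coeff_mk _ _) ▸ rfl
  refine ⟨L, ?_⟩
  rw [← sub_eq_zero]
  have key : ∀ n, WittVector.truncate n (a * frobenius L - L - y) = 0 := by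
    intro n
    have h1 : WittVector.truncate n (a * frobenius L - L - y)
        = WittVector.truncate n (a * frobenius (X n) - X n - y) := by
      simp only [map_sub, map_mul]
      rw [aux_trunc_frob (hL n), hL n]
    rw [h1, hsX n, aux_trunc_vshift' (le_refl n)]
  ext i
  have h0 : (WittVector.truncate (i + 1) (a * frobenius L - L - y)).coeff
      ⟨i, Nat.lt_succ_self i⟩ = 0 := by rw [key (i + 1)]; simp
  rw [WittVector.coeff_truncate] at h0
  simpa using h0

lemma aux_fixed (a : 𝕎 k) (ha : a.coeff 0 ≠ 0) :
    ∃ b : 𝕎 k, b.coeff 0 ≠ 0 ∧ a * frobenius b = b := by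
  have h1 : (1 : 𝕎 k).coeff 0 ≠ 0 := by
    rw [WittVector.one_coeff_zero]; exact one_ne_zero
  refine ⟨frobeniusRotation p ha h1, ?_, ?_⟩
  · have : (frobeniusRotation p ha h1).coeff 0 = RecursionBase.solution p a 1 := by
      rw [frobeniusRotation] <;> simp [WittVector.coeff_mk, frobeniusRotationCoeff]
    rw [this]
    exact RecursionBase.solution_nonzero p ha h1
  · have := frobenius_frobeniusRotation p ha h1
    rw [mul_one] at this
    rw [mul_comm]; exact this

end Aux

theorem stmt_1 (p : ℕ) [Fact p.Prime]
    (ε₁ : (WittVector p (AlgebraicClosure (ZMod p)))ˣ)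
    (ε₂ : WittVector p (AlgebraicClosure (ZMod p))) :
    ∃ x : (WittVector p (AlgebraicClosure (ZMod p)))ˣ,
      (ε₁ : WittVector p (AlgebraicClosure (ZMod p))) * WittVector.frobenius (x : WittVector p (AlgebraicClosure (ZMod p))) - x = ε₂ := by
  have hε : (ε₁ : WittVector p (AlgebraicClosure (ZMod p))).coeff 0 ≠ 0 := by
    have := (ε₁.isUnit.map WittVector.constantCoeff).ne_zero
    simpa using this
  obtain ⟨x₀, hx₀⟩ := aux_surj (p := p) (ε₁ : WittVector p (AlgebraicClosure (ZMod p))) ε₂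
  obtain ⟨b, hb0, hbfix⟩ := aux_fixed (p := p) (ε₁ : WittVector p (AlgebraicClosure (ZMod p))) hε
  by_cases h : x₀.coeff 0 = 0
  · have hXc : (x₀ + b).coeff 0 ≠ 0 := by
      rw [WittVector.add_coeff_zero, h, zero_add]; exact hb0
    have hX := isUnit_of_coeff_zero_ne_zero (x₀ + b) hXc
    refine ⟨hX.unit, ?_⟩
    rw [hX.unit_spec, map_add, mul_add, hbfix]
    linear_combination hx₀
  · have hX := isUnit_of_coeff_zero_ne_zero x₀ h
    refine ⟨hX.unit, ?_⟩
    rw [hX.unit_spec]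
    exact hx₀
end

section
/- Let R be a complete discrete valuation ring whose residue field is algebraically closed of characteristic p, let q = p^h for some integer h ≥ 1, and let σ : R → R be a ring endomorphism such that σ(x) ≡ x^q modulo the maximal ideal of R for every x ∈ R. Then for every unit c ∈ R^× there exists a unit t ∈ R^× such that c·σ(t) = t. -/
open Polynomial

private lemma aux_root_s4 (k : Type*) [Field k] [IsAlgClosed k] (q : ℕ) (hq : 2 ≤ q) (d b : k) :
    ∃ a : k, d * a ^ q - a + b = 0 := by
  by_cases hd : d = 0
  · exact ⟨b, by simp [hd]⟩
  · have h1 : (-X + C b : k[X]).degree < (C d * X ^ q).degree := by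
      rw [Polynomial.degree_C_mul_X_pow q hd]
      refine lt_of_le_of_lt (Polynomial.degree_add_le _ _) ?_
      simp only [Polynomial.degree_neg, Polynomial.degree_X]
      refine max_lt ?_ (lt_of_le_of_lt Polynomial.degree_C_le ?_)
      · exact_mod_cast by omega
      · exact_mod_cast by omega
    have hdeg : (C d * X ^ q + (-X + C b)).degree = (q : WithBot ℕ) := by
      rw [Polynomial.degree_add_eq_left_of_degree_lt h1, Polynomial.degree_C_mul_X_pow q hd]
    obtain ⟨a, ha⟩ := IsAlgClosed.exists_root (C d * X ^ q + (-X + C b)) (by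
      rw [hdeg]; exact_mod_cast by omega)
    refine ⟨a, ?_⟩
    rw [IsRoot, eval_add, eval_add, eval_mul, eval_pow, eval_C, eval_X, eval_neg, eval_X,
      eval_C] at ha
    linear_combination ha

private lemma aux_base (k : Type*) [Field k] [IsAlgClosed k] (q : ℕ) (hq : 2 ≤ q) (cb : k)
    (hc : cb ≠ 0) : ∃ a : k, a ≠ 0 ∧ cb * a ^ q = a := by
  obtain ⟨a, ha⟩ := IsAlgClosed.exists_root (X ^ (q - 1) - C cb⁻¹ : k[X]) (by
    rw [Polynomial.degree_X_pow_sub_C (by omega) cb⁻¹]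
    exact_mod_cast by omega)
  rw [IsRoot, eval_sub, eval_pow, eval_X, eval_C, sub_eq_zero] at ha
  have ha0 : a ≠ 0 := by
    intro h0
    rw [h0, zero_pow (by omega)] at ha
    exact hc (by simpa using ha.symm)
  refine ⟨a, ha0, ?_⟩
  have : a ^ q = a ^ (q - 1) * a := by
    rw [← pow_succ]; congr 1; omega
  rw [this, ha]
  field_simp

theorem stmt_4 (p : ℕ) (hp : p.Prime) (h : ℕ) (hh : 1 ≤ h) (q : ℕ) (hq : q = p ^ h)
    (R : Type*) [CommRing R] [IsDomain R] [IsDiscreteValuationRing R]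
    [IsAdicComplete (IsLocalRing.maximalIdeal R) R]
    [IsAlgClosed (IsLocalRing.ResidueField R)]
    (hchar : CharP (IsLocalRing.ResidueField R) p)
    (σ : R →+* R) (hσ : ∀ x : R, σ x - x ^ q ∈ IsLocalRing.maximalIdeal R)
    (c : Rˣ) :
    ∃ t : Rˣ, (c : R) * σ t = t := by
  have hq2 : 2 ≤ q := by
    rw [hq]; exact Nat.one_lt_pow (by omega) hp.one_lt
  set I := IsLocalRing.maximalIdeal R with hIdef
  set k := IsLocalRing.ResidueField R
  set res := IsLocalRing.residue R with hresdef
  have hres : Function.Surjective res := Ideal.Quotient.mk_surjective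
  have hmem : ∀ x : R, x ∈ I ↔ res x = 0 := fun x => (Ideal.Quotient.eq_zero_iff_mem).symm
  have hfrob : ∀ x : R, res (σ x) = (res x) ^ q := by
    intro x
    have := (hmem _).mp (hσ x)
    rw [map_sub, sub_eq_zero] at this
    rw [this, map_pow]
  obtain ⟨π, hπ⟩ := IsDiscreteValuationRing.exists_irreducible R
  have hI : I = Ideal.span {π} := hπ.maximalIdeal_eq
  have hIn : ∀ n : ℕ, I ^ n = Ideal.span {π ^ n} := fun n => by
    rw [hI, Ideal.span_singleton_pow]
  have hmemIn : ∀ (n : ℕ) (x : R), x ∈ I ^ n ↔ π ^ n ∣ x := fun n x => by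
    rw [hIn, Ideal.mem_span_singleton]
  -- σ π = π * w
  have hσπ : σ π ∈ I := by
    have h1 := hσ π
    have h2 : π ^ q ∈ I := Ideal.pow_mem_of_mem I (by rw [hI]; exact Ideal.mem_span_singleton_self π) q (by omega)
    have := I.add_mem h1 h2
    simpa using this
  obtain ⟨w, hw⟩ : ∃ w, σ π = π * w := by
    rw [hI, Ideal.mem_span_singleton] at hσπ; exact hσπ
  -- the inductive step
  have step : ∀ (n : ℕ) (t : R), (c : R) * σ t - t ∈ I ^ (n + 1) →
      ∃ t' : R, t' - t ∈ I ^ (n + 1) ∧ (c : R) * σ t' - t' ∈ I ^ (n + 2) := by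
    intro n t ht
    obtain ⟨u, hu⟩ := (hmemIn _ _).mp ht
    obtain ⟨a, ha⟩ := aux_root_s4 k q hq2 (res ((c : R) * w ^ (n + 1))) (res u)
    obtain ⟨A, hA⟩ := hres a
    set z : R := (c : R) * w ^ (n + 1) * σ A - A + u with hz
    have hzI : z ∈ I := by
      rw [hmem, hz, map_add, map_sub, map_mul, hfrob, hA, ha]
    obtain ⟨z₁, hz₁⟩ : ∃ z₁, z = π * z₁ := by
      rw [hI, Ideal.mem_span_singleton] at hzI; exact hzI
    refine ⟨t + π ^ (n + 1) * A, ?_, ?_⟩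
    · rw [hmemIn]; exact ⟨A, by ring⟩
    · rw [hmemIn]
      refine ⟨z₁, ?_⟩
      have hσt' : σ (t + π ^ (n + 1) * A) = σ t + (π * w) ^ (n + 1) * σ A := by
        rw [map_add, map_mul, map_pow, hw]
      rw [hσt']
      calc (c : R) * (σ t + (π * w) ^ (n + 1) * σ A) - (t + π ^ (n + 1) * A)
          = ((c : R) * σ t - t) + π ^ (n + 1) * ((c : R) * w ^ (n + 1) * σ A - A) := by ring
        _ = π ^ (n + 1) * z := by rw [hu, hz]; ring
        _ = π ^ (n + 2) * z₁ := by rw [hz₁]; ring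
  -- base case
  have hcne : res (c : R) ≠ 0 := by
    intro h0
    have : (c : R) ∈ I := (hmem _).mpr h0
    exact (IsLocalRing.mem_maximalIdeal _).mp this (c.isUnit)
  obtain ⟨a₀, ha₀ne, ha₀⟩ := aux_base k q hq2 (res (c : R)) hcne
  obtain ⟨t₀, ht₀⟩ := hres a₀
  have ht₀I : t₀ ∉ I := by
    rw [hmem, ht₀]; exact ha₀ne
  have ht₀e : (c : R) * σ t₀ - t₀ ∈ I ^ (0 + 1) := by
    rw [pow_one, hmem, map_sub, map_mul, hfrob, ht₀, ha₀, sub_self]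
  -- the sequence
  let F : ∀ n : ℕ, {t : R // (c : R) * σ t - t ∈ I ^ (n + 1)} := fun n =>
    Nat.rec ⟨t₀, ht₀e⟩
      (fun m tm => ⟨(step m tm.1 tm.2).choose, (step m tm.1 tm.2).choose_spec.2⟩) n
  have hFd : ∀ n : ℕ, (F (n + 1)).1 - (F n).1 ∈ I ^ (n + 1) := fun n =>
    (step n (F n).1 (F n).2).choose_spec.1
  set g : ℕ → R := fun n => (F n).1 with hg
  have hdiff : ∀ m n : ℕ, m ≤ n → g n - g m ∈ I ^ (m + 1) := by
    intro m n hmn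
    induction n, hmn using Nat.le_induction with
    | base => simpa using (I ^ (m + 1)).zero_mem
    | succ n hmn ih =>
      have h1 : g (n + 1) - g n ∈ I ^ (m + 1) :=
        Ideal.pow_le_pow_right (by omega) (hFd n)
      have := (I ^ (m + 1)).add_mem h1 ih
      simpa using this
  have hst : ∀ J : Ideal R, (J • ⊤ : Submodule R R) = J := fun J => by
    rw [smul_eq_mul, Ideal.mul_top]
  obtain ⟨L, hL⟩ := IsPrecomplete.prec (IsAdicComplete.toIsPrecomplete (I := I))
    (f := g) (by
      intro m n hmn
      rw [SModEq.sub_mem, hst]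
      have := (I ^ m).neg_mem (Ideal.pow_le_pow_right (by omega) (hdiff m n hmn))
      simpa using this)
  have hLn : ∀ n : ℕ, L - g n ∈ I ^ n := by
    intro n
    have := (SModEq.sub_mem.mp (hL n))
    rw [hst] at this
    simpa using (I ^ n).neg_mem this
  -- sigma preserves I^n
  have hσIn : ∀ (n : ℕ) (x : R), x ∈ I ^ n → σ x ∈ I ^ n := by
    intro n x hx
    rw [hmemIn] at hx ⊢
    obtain ⟨y, hy⟩ := hx
    exact ⟨w ^ n * σ y, by rw [hy, map_mul, map_pow, hw]; ring⟩
  have hfinal : (c : R) * σ L - L = 0 := by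
    refine IsHausdorff.haus (IsAdicComplete.toIsHausdorff (I := I)) _ (fun n => ?_)
    rw [SModEq.sub_mem, sub_zero, hst]
    have heq : (c : R) * σ L - L =
        ((c : R) * σ (g n) - g n) + ((c : R) * σ (L - g n) - (L - g n)) := by
      rw [map_sub]; ring
    rw [heq]
    refine (I ^ n).add_mem (Ideal.pow_le_pow_right (by omega) (F n).2) ?_
    exact (I ^ n).sub_mem (Ideal.mul_mem_left _ _ (hσIn n _ (hLn n))) (hLn n)
  have hLunit : IsUnit L := by
    by_contra hnu
    have hLI : L ∈ I := (IsLocalRing.mem_maximalIdeal L).mpr hnu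
    have h1 : L - g 0 ∈ I := by
      have h2 : L - g 1 ∈ I := Ideal.pow_le_self one_ne_zero (hLn 1)
      have h3 : g 1 - g 0 ∈ I := Ideal.pow_le_self one_ne_zero (hFd 0)
      have := I.add_mem h2 h3
      simpa using this
    have : t₀ ∈ I := by
      have := I.sub_mem hLI h1
      have hg0 : g 0 = t₀ := rfl
      rw [hg0] at this
      simpa using this
    exact ht₀I this
  obtain ⟨T, hT⟩ := hLunit
  exact ⟨T, by rw [hT]; exact sub_eq_zero.mp hfinal⟩
end

section
/- Let p be a prime, let k̄ be an algebraic closure of the field with p elements, let W = 𝕎(k̄) be the ring of p-typical Witt vectors of k̄, and let φ : W → W be the Witt vector Frobenius. Then for every unit c ∈ W^× there exists a unit t ∈ W^× such that φ(t) = c·t. -/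
theorem stmt_5 (p : ℕ) [Fact p.Prime]
    (c : (WittVector p (AlgebraicClosure (ZMod p)))ˣ) :
    ∃ t : (WittVector p (AlgebraicClosure (ZMod p)))ˣ,
      WittVector.frobenius (t : WittVector p (AlgebraicClosure (ZMod p)))
        = (c : WittVector p (AlgebraicClosure (ZMod p))) * t := by
  set k := AlgebraicClosure (ZMod p)
  have h1 : (1 : WittVector p k).coeff 0 ≠ 0 := by simp
  have hc : (c : WittVector p k).coeff 0 ≠ 0 := by
    have := (WittVector.constantCoeff : WittVector p k →+* k).isUnit_map c.isUnit
    simpa [WittVector.constantCoeff_apply] using this.ne_zero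
  have hr := WittVector.frobenius_frobeniusRotation p h1 hc
  have hcoeff : (WittVector.frobeniusRotation p h1 hc).coeff 0 ≠ 0 := by
    simpa [WittVector.frobeniusRotation, WittVector.frobeniusRotationCoeff] using
      WittVector.RecursionBase.solution_nonzero p h1 hc
  have hru : IsUnit (WittVector.frobeniusRotation p h1 hc) :=
    WittVector.isUnit_of_coeff_zero_ne_zero _ hcoeff
  refine ⟨hru.unit, ?_⟩
  rw [IsUnit.unit_spec]
  rw [mul_one] at hr
  rw [hr, mul_comm]
end

section
/- Let p be a prime, let k̄ be an algebraic closure of the field with p elements, let W = 𝕎(k̄) be the ring of p-typical Witt vectors of k̄, and let φ : W → W be the Witt vector Frobenius. Then for every unit ε₁ ∈ W^×, the additive map W → W sending x to ε₁·φ(x) − x is surjective. -/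
set_option linter.unusedSectionVars false

namespace Stmt6Aux

open WittVector Polynomial

variable {p : ℕ} [hp : Fact p.Prime] {k : Type*} [Field k] [CharP k p] [PerfectRing k p]

local notation "𝕎" => WittVector p

lemma dvd_of_coeff_zero (n : ℕ) : ∀ x : 𝕎 k, (∀ i < n, x.coeff i = 0) → (p : 𝕎 k) ^ n ∣ x := by
  induction n with
  | zero => intro x _; simp
  | succ n ih =>
    intro x hx
    have h0 : ∀ i < 1, x.coeff i = 0 := by
      intro i hi
      obtain rfl : i = 0 := by omega
      exact hx 0 (Nat.succ_pos n)
    have hxv : x = verschiebung (x.shift 1) := by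
      simpa using eq_iterate_verschiebung (x := x) (n := 1) h0
    obtain ⟨u, hu⟩ := (frobenius_bijective p k).surjective (x.shift 1)
    have hx' : x = u * p := by rw [hxv, ← hu, verschiebung_frobenius]
    have hucoeff : ∀ i < n, u.coeff i = 0 := by
      intro i hi
      have h := hx (i + 1) (by omega)
      rw [hx', mul_charP_coeff_succ] at h
      exact (pow_eq_zero_iff hp.out.ne_zero).mp h
    obtain ⟨c, hc⟩ := ih u hucoeff
    exact ⟨c, by rw [hx', hc, pow_succ]; ring⟩

lemma coeff_zero_of_dvd (n : ℕ) : ∀ x : 𝕎 k, (p : 𝕎 k) ^ n ∣ x → ∀ i < n, x.coeff i = 0 := by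
  induction n with
  | zero => intro x _ i hi; omega
  | succ n ih =>
    rintro x ⟨c, hc⟩ i hi
    have hx : x = ((p : 𝕎 k) ^ n * c) * p := by rw [hc, pow_succ]; ring
    rcases i with _ | i
    · rw [hx, mul_charP_coeff_zero]
    · rw [hx, mul_charP_coeff_succ, ih _ ⟨c, rfl⟩ i (by omega),
        zero_pow hp.out.ne_zero]

lemma add_coeff_eq (a b : 𝕎 k) (n : ℕ) (hb : ∀ i < n, b.coeff i = 0) :
    ∀ i < n, (a + b).coeff i = a.coeff i := by
  intro i hi
  have hb0 : WittVector.truncate n b = 0 :=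
    RingHom.mem_ker.mp ((mem_ker_truncate n b).mpr hb)
  have h : WittVector.truncate n (a + b) = WittVector.truncate n a := by
    rw [map_add, hb0, add_zero]
  have := congrArg (TruncatedWittVector.coeff (⟨i, hi⟩ : Fin n)) h
  rwa [coeff_truncate, coeff_truncate] at this

lemma dvd_sub_of_coeff_eq (a b : 𝕎 k) (n : ℕ) (h : ∀ i < n, a.coeff i = b.coeff i) :
    (p : 𝕎 k) ^ n ∣ a - b := by
  apply dvd_of_coeff_zero
  have h0 : WittVector.truncate n (a - b) = 0 := by
    rw [map_sub, sub_eq_zero]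
    apply TruncatedWittVector.ext
    intro j
    simp only [coeff_truncate]
    exact h j j.2
  exact (mem_ker_truncate n _).mp (RingHom.mem_ker.mpr h0)

variable [IsAlgClosed k]

lemma step1 (ε : (𝕎 k)ˣ) (c : 𝕎 k) :
    ∃ u z : 𝕎 k, (ε : 𝕎 k) * frobenius u - u = c + (p : 𝕎 k) * z := by
  set ε₀ : k := WittVector.constantCoeff (ε : 𝕎 k) with hε₀def
  have hε₀ : ε₀ ≠ 0 := (ε.isUnit.map (WittVector.constantCoeff (p := p))).ne_zero
  set c₀ : k := WittVector.constantCoeff c with hc₀def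
  have h2 : 2 ≤ p := hp.out.two_le
  have hd1 : (X + C c₀ : k[X]).degree ≤ 1 :=
    (degree_add_le _ _).trans (max_le degree_X_le (degree_C_le.trans (by norm_num)))
  have hqdeg : (C ε₀ * X ^ p - X - C c₀ : k[X]).degree = p := by
    have hrw : (C ε₀ * X ^ p - X - C c₀ : k[X]) = C ε₀ * X ^ p - (X + C c₀) := by ring
    rw [hrw, degree_sub_eq_left_of_degree_lt, degree_C_mul_X_pow p hε₀]
    rw [degree_C_mul_X_pow p hε₀]
    refine lt_of_le_of_lt hd1 ?_
    exact_mod_cast Nat.lt_of_lt_of_le one_lt_two h2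
  obtain ⟨t, ht⟩ := IsAlgClosed.exists_root (C ε₀ * X ^ p - X - C c₀ : k[X])
    (by rw [hqdeg]; exact_mod_cast (Nat.cast_ne_zero (R := WithBot ℕ)).mpr hp.out.ne_zero)
  have ht' : ε₀ * t ^ p - t - c₀ = 0 := by
    simpa [Polynomial.IsRoot] using ht
  set u : 𝕎 k := WittVector.mk p (fun i => if i = 0 then t else 0) with hudef
  have hw0 : ∀ i < 1, ((ε : 𝕎 k) * frobenius u - u - c).coeff i = 0 := by
    intro i hi
    obtain rfl : i = 0 := by omega
    have : WittVector.constantCoeff ((ε : 𝕎 k) * frobenius u - u - c) = 0 := by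
      simp only [map_sub, map_mul, WittVector.constantCoeff_apply, coeff_frobenius_charP,
        hudef, coeff_mk, if_pos rfl]
      rw [← WittVector.constantCoeff_apply, ← WittVector.constantCoeff_apply, ← hε₀def, ← hc₀def]
      simp only [if_true]
      linear_combination ht'
    simpa [WittVector.constantCoeff_apply] using this
  obtain ⟨z, hz⟩ := dvd_of_coeff_zero 1 _ hw0
  exact ⟨u, z, by linear_combination hz⟩

noncomputable def seq (ε : (𝕎 k)ˣ) (y : 𝕎 k) : ℕ → 𝕎 k × 𝕎 k
  | 0 => (0, -y)
  | n + 1 =>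
    ((seq ε y n).1 + (p : 𝕎 k) ^ n * (step1 ε (-(seq ε y n).2)).choose,
      (step1 ε (-(seq ε y n).2)).choose_spec.choose)

lemma seq_spec (ε : (𝕎 k)ˣ) (y : 𝕎 k) : ∀ n,
    (ε : 𝕎 k) * frobenius (seq ε y n).1 - (seq ε y n).1 = y + (p : 𝕎 k) ^ n * (seq ε y n).2
  | 0 => by simp [seq]
  | n + 1 => by
    have ih := seq_spec ε y n
    have hu := (step1 ε (-(seq ε y n).2)).choose_spec.choose_spec
    simp only [seq]
    rw [map_add, map_mul, map_pow, map_natCast]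
    linear_combination ih + (p : 𝕎 k) ^ n * hu

lemma seq_coeff_succ (ε : (𝕎 k)ˣ) (y : 𝕎 k) (n i : ℕ) (hi : i < n) :
    ((seq ε y (n + 1)).1).coeff i = ((seq ε y n).1).coeff i := by
  have hz : ∀ j < n, ((p : 𝕎 k) ^ n * (step1 ε (-(seq ε y n).2)).choose).coeff j = 0 :=
    coeff_zero_of_dvd n _ ⟨_, rfl⟩
  simp only [seq]
  exact add_coeff_eq _ _ n hz i hi

lemma seq_coeff_le (ε : (𝕎 k)ˣ) (y : 𝕎 k) (n : ℕ) :
    ∀ m, n ≤ m → ∀ i < n, ((seq ε y m).1).coeff i = ((seq ε y n).1).coeff i := by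
  intro m
  induction m with
  | zero =>
    intro h i hi
    exact absurd hi (by omega)
  | succ m ih =>
    intro h i hi
    rcases Nat.eq_or_lt_of_le h with rfl | h'
    · rfl
    · have hm : n ≤ m := by omega
      rw [seq_coeff_succ ε y m i (by omega), ih hm i hi]

end Stmt6Aux

open Stmt6Aux WittVector
theorem stmt_6 (p : ℕ) [Fact p.Prime]
    (ε₁ : (WittVector p (AlgebraicClosure (ZMod p)))ˣ) :
    Function.Surjective (fun x : WittVector p (AlgebraicClosure (ZMod p)) =>
      (ε₁ : WittVector p (AlgebraicClosure (ZMod p))) * WittVector.frobenius x - x) := by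
  intro y
  set X : WittVector p (AlgebraicClosure (ZMod p)) :=
    WittVector.mk p (fun n => ((seq ε₁ y (n + 1)).1).coeff n) with hXdef
  refine ⟨X, ?_⟩
  show (ε₁ : WittVector p (AlgebraicClosure (ZMod p))) * WittVector.frobenius X - X = y
  have hdvd : ∀ n : ℕ, (p : WittVector p (AlgebraicClosure (ZMod p))) ^ n ∣
      ((ε₁ : WittVector p (AlgebraicClosure (ZMod p))) * WittVector.frobenius X - X - y) := by
    intro n
    have h1 : (p : WittVector p (AlgebraicClosure (ZMod p))) ^ n ∣ X - (seq ε₁ y n).1 := by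
      apply dvd_sub_of_coeff_eq
      intro i hi
      have : X.coeff i = ((seq ε₁ y (i + 1)).1).coeff i := by rw [hXdef, coeff_mk]
      rw [this]
      exact (seq_coeff_le ε₁ y (i + 1) n (by omega) i (by omega)).symm
    obtain ⟨c, hc⟩ := h1
    refine ⟨(seq ε₁ y n).2 + (ε₁ : WittVector p (AlgebraicClosure (ZMod p))) * WittVector.frobenius c - c, ?_⟩
    have hX : X = (seq ε₁ y n).1 + (p : WittVector p (AlgebraicClosure (ZMod p))) ^ n * c := by linear_combination hc
    rw [hX, map_add, map_mul, map_pow, map_natCast]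
    linear_combination seq_spec ε₁ y n
  have hzero : (ε₁ : WittVector p (AlgebraicClosure (ZMod p))) * WittVector.frobenius X - X - y = 0 := by
    apply WittVector.ext
    intro i
    rw [WittVector.zero_coeff]
    exact coeff_zero_of_dvd (i + 1) _ (hdvd (i + 1)) i (by omega)
  have hfinal : (ε₁ : WittVector p (AlgebraicClosure (ZMod p))) * WittVector.frobenius X - X = y := by
    linear_combination hzero
  exact hfinal
end
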